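/- The polynomial Θ₂(x₀,x₁) = x₀³x₁³ - 6x₀³x₁² - 6x₀²x₁³ + 8x₀³x₁ + 30x₀²x₁² + 8x₀x₁³ - 2x₀³ - 34x₀²x₁ - 34x₀x₁² - 2x₁³ + 8x₀² + 30x₀x₁ + 8x₁² - 6x₀ - 6x₁ + 1 is irreducible in ℚ[x₀,x₁]. -/

import Mathlib

namespace Stmt8Aux

open Polynomial

noncomputable section

abbrev R : Type := MvPolynomial (Fin 1) ℚ

def t : R := MvPolynomial.X 0
def c3 : R := t^3 - 6*t^2 + 8*t - 2
def c2 : R := -6*t^3 + 30*t^2 - 34*t + 8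
def c1 : R := 8*t^3 - 34*t^2 + 30*t - 6
def c0 : R := -2*t^3 + 8*t^2 - 6*t + 1

def Q : Polynomial R := C c0 + C c1 * X + C c2 * X^2 + C c3 * X^3

lemma hQcoeff3 : Q.coeff 3 = c3 := by
  simp [Q, coeff_X_pow, coeff_C]

lemma hQcoeff0 : Q.coeff 0 = c0 := by
  simp [Q, coeff_X_pow, coeff_C]

lemma hc3 : c3 ≠ 0 := by
  intro h
  have := congrArg (MvPolynomial.eval (fun _ => (0:ℚ))) h
  simp [c3, t, map_ofNat] at this

lemma hQdeg : Q.natDegree = 3 :=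
  le_antisymm (by unfold Q; compute_degree)
    (le_natDegree_of_ne_zero (by rw [hQcoeff3]; exact hc3))

lemma hQ0 : Q ≠ 0 := by
  intro h
  exact hc3 (by rw [← hQcoeff3, h, coeff_zero])

def ev : R →+* ℚ := MvPolynomial.eval (fun _ => (2:ℚ))

def φ : Polynomial R →+* Polynomial ℚ :=
  (Polynomial.eval₂RingHom Polynomial.C (Polynomial.X + Polynomial.C 1)).comp
    (Polynomial.mapRingHom ev)

lemma hφQ : φ Q = -2*X^3 + 6*X^2 - 3 := by
  simp only [φ, Q, c0, c1, c2, c3, t, RingHom.comp_apply, coe_mapRingHom,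
    Polynomial.map_add, Polynomial.map_mul, Polynomial.map_pow, Polynomial.map_ofNat,
    map_C, Polynomial.map_X, coe_eval₂RingHom, eval₂_add, eval₂_mul, eval₂_pow,
    eval₂_C, eval₂_X, map_sub, map_add, map_mul, map_pow, map_neg, map_ofNat,
    ev, MvPolynomial.eval_X, map_one]
  norm_num
  ring

lemma hφdeg (f : Polynomial R) : (φ f).natDegree ≤ f.natDegree := by
  have h : φ f = (f.map ev).comp (X + Polynomial.C 1) := by
    simp [φ, Polynomial.comp]
  rw [h]
  refine le_trans natDegree_comp_le ?_
  rw [natDegree_X_add_C (1:ℚ), mul_one]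
  exact natDegree_map_le

def z : Polynomial ℤ := -2*X^3 + 6*X^2 - 3

lemma hzdeg : z.natDegree = 3 := by unfold z; compute_degree!

lemma hzprim : z.IsPrimitive := by
  intro r hr
  have h0 : r ∣ z.coeff 0 := (C_dvd_iff_dvd_coeff r z).mp hr 0
  have h3 : r ∣ z.coeff 3 := (C_dvd_iff_dvd_coeff r z).mp hr 3
  simp only [z, coeff_sub, coeff_add, coeff_X_pow] at h0 h3
  norm_num at h0 h3
  exact isUnit_of_dvd_one (by simpa using dvd_sub h0 h3)

lemma hzirr : Irreducible z := by
  have hdeg : z.degree = 3 := by unfold z; compute_degree!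
  apply irreducible_of_eisenstein_criterion
    ((Ideal.span_singleton_prime (by norm_num)).mpr (by norm_num : Prime (3:ℤ)))
  · rw [leadingCoeff, hzdeg, Ideal.mem_span_singleton]
    have : z.coeff 3 = -2 := by simp [z, coeff_X_pow]
    rw [this]; decide
  · intro n hn
    rw [hdeg] at hn
    have hn3 : n < 3 := by exact_mod_cast hn
    rw [Ideal.mem_span_singleton]
    interval_cases n <;> simp [z, coeff_X_pow] <;> norm_num
  · rw [hdeg]; decide
  · rw [Ideal.span_singleton_pow, Ideal.mem_span_singleton]
    have : z.coeff 0 = -3 := by simp [z, coeff_X_pow]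
    rw [this]; decide
  · exact hzprim

lemma hz'irr : Irreducible ((-2*X^3 + 6*X^2 - 3 : Polynomial ℚ)) := by
  have h := (Polynomial.IsPrimitive.Int.irreducible_iff_irreducible_map_cast hzprim).mp hzirr
  have hmap : z.map (Int.castRingHom ℚ) = -2*X^3 + 6*X^2 - 3 := by
    simp [z]
  rwa [hmap] at h

lemma combo : (-78 + 172*t - 48*t^2) * c3 + (-139 + 134*t - 24*t^2) * c0 = 17 := by
  unfold c3 c0
  ring

lemma unit17 : IsUnit (17 : R) := by
  apply IsUnit.of_mul_eq_one (MvPolynomial.C (17⁻¹ : ℚ))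
  rw [← map_ofNat (MvPolynomial.C : ℚ →+* R) 17, ← map_mul]
  norm_num

lemma const_factor {a : R} (hdvd : Polynomial.C a ∣ Q) : IsUnit a := by
  have h3 : a ∣ c3 := by
    obtain ⟨g, hg⟩ := hdvd
    exact ⟨g.coeff 3, by rw [← hQcoeff3, hg, coeff_C_mul]⟩
  have h0 : a ∣ c0 := by
    obtain ⟨g, hg⟩ := hdvd
    exact ⟨g.coeff 0, by rw [← hQcoeff0, hg, coeff_C_mul]⟩
  have h17 : a ∣ (17 : R) := by
    rw [← combo]
    exact dvd_add (Dvd.dvd.mul_left h3 _) (Dvd.dvd.mul_left h0 _)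
  exact isUnit_of_dvd_unit h17 unit17

lemma hQirr : Irreducible Q := by
  rw [irreducible_iff]
  constructor
  · intro hu
    have h := natDegree_eq_zero_of_isUnit hu
    rw [hQdeg] at h
    exact three_ne_zero h
  · intro f g hfg
    have hf0 : f ≠ 0 := by rintro rfl; exact hQ0 (by rw [hfg, zero_mul])
    have hg0 : g ≠ 0 := by rintro rfl; exact hQ0 (by rw [hfg, mul_zero])
    have hsum : f.natDegree + g.natDegree = 3 := by
      rw [← natDegree_mul hf0 hg0, ← hfg, hQdeg]
    have hφfg : φ f * φ g = -2*X^3 + 6*X^2 - 3 := by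
      rw [← map_mul, ← hfg, hφQ]
    have hz0 : (-2*X^3 + 6*X^2 - 3 : Polynomial ℚ) ≠ 0 := hz'irr.ne_zero
    have hφf0 : φ f ≠ 0 := fun h => hz0 (by rw [← hφfg, h, zero_mul])
    have hφg0 : φ g ≠ 0 := fun h => hz0 (by rw [← hφfg, h, mul_zero])
    have hz'deg : (-2*X^3 + 6*X^2 - 3 : Polynomial ℚ).natDegree = 3 := by
      compute_degree!
    have hφsum : (φ f).natDegree + (φ g).natDegree = 3 := by
      rw [← natDegree_mul hφf0 hφg0, hφfg, hz'deg]
    rcases hz'irr.isUnit_or_isUnit hφfg.symm with hu | hu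
    · left
      have hd : (φ f).natDegree = 0 := natDegree_eq_zero_of_isUnit hu
      have hfdeg : f.natDegree = 0 := by
        have := hφdeg f; have := hφdeg g; omega
      have hfC : f = Polynomial.C (f.coeff 0) := eq_C_of_natDegree_eq_zero hfdeg
      rw [hfC]
      exact Polynomial.isUnit_C.mpr (const_factor (hfC ▸ ⟨g, hfg⟩))
    · right
      have hd : (φ g).natDegree = 0 := natDegree_eq_zero_of_isUnit hu
      have hgdeg : g.natDegree = 0 := by
        have := hφdeg f; have := hφdeg g; omega
      have hgC : g = Polynomial.C (g.coeff 0) := eq_C_of_natDegree_eq_zero hgdeg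
      rw [hgC]
      refine Polynomial.isUnit_C.mpr (const_factor ?_)
      exact hgC ▸ ⟨f, by rw [hfg, mul_comm]⟩

lemma transfer :
    (MvPolynomial.finSuccEquiv ℚ 1)
      ((MvPolynomial.X 0)^3*(MvPolynomial.X (1 : Fin 2))^3 - 6*(MvPolynomial.X 0)^3*(MvPolynomial.X (1 : Fin 2))^2 - 6*(MvPolynomial.X 0)^2*(MvPolynomial.X (1 : Fin 2))^3 + 8*(MvPolynomial.X 0)^3*(MvPolynomial.X (1 : Fin 2))
        + 30*(MvPolynomial.X 0)^2*(MvPolynomial.X (1 : Fin 2))^2 + 8*(MvPolynomial.X 0)*(MvPolynomial.X (1 : Fin 2))^3 - 2*(MvPolynomial.X 0)^3 - 34*(MvPolynomial.X 0)^2*(MvPolynomial.X (1 : Fin 2))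
        - 34*(MvPolynomial.X 0)*(MvPolynomial.X (1 : Fin 2))^2 - 2*(MvPolynomial.X (1 : Fin 2))^3 + 8*(MvPolynomial.X 0)^2 + 30*(MvPolynomial.X 0)*(MvPolynomial.X (1 : Fin 2)) + 8*(MvPolynomial.X (1 : Fin 2))^2
        - 6*(MvPolynomial.X 0) - 6*(MvPolynomial.X (1 : Fin 2)) + 1 : MvPolynomial (Fin 2) ℚ) = Q := by
  have hX1 : (MvPolynomial.X (1 : Fin 2) : MvPolynomial (Fin 2) ℚ) = MvPolynomial.X (Fin.succ 0) := rfl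
  simp only [Q, c0, c1, c2, c3, t, hX1, map_add, map_sub, map_mul, map_pow, map_ofNat,
    map_neg, map_one, MvPolynomial.finSuccEquiv_X_zero, MvPolynomial.finSuccEquiv_X_succ,
    Polynomial.map_ofNat]
  push_cast
  ring

end

end Stmt8Aux

open MvPolynomial

theorem stmt_8
    (x₀ x₁ : MvPolynomial (Fin 2) ℚ) (h0 : x₀ = X 0) (h1 : x₁ = X 1) :
    Irreducible (x₀^3*x₁^3 - 6*x₀^3*x₁^2 - 6*x₀^2*x₁^3 + 8*x₀^3*x₁ + 30*x₀^2*x₁^2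
      + 8*x₀*x₁^3 - 2*x₀^3 - 34*x₀^2*x₁ - 34*x₀*x₁^2 - 2*x₁^3 + 8*x₀^2 + 30*x₀*x₁
      + 8*x₁^2 - 6*x₀ - 6*x₁ + 1) := by
  subst h0 h1
  rw [← MulEquiv.irreducible_iff (MvPolynomial.finSuccEquiv ℚ 1)]
  rw [Stmt8Aux.transfer]
  exact Stmt8Aux.hQirr
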